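/- Strong duality for the PTE program (Eq. (17)): if m ≥ 1, s ≥ 1 and τ > 0, then there exist a TSP-feasible triple (π, Q, P) and a TGP-feasible pair (v, u) for τ whose objective values are equal, τ * (∑ i, Q i + ∑ r, P r) = ∑ i, v i * x o i - ∑ r, u r * y o r; consequently (π, Q, P) maximizes the primal objective over TSP-feasible triples and (v, u) minimizes the dual objective over TGP-feasible pairs for τ, and the two optimal values coincide. -/

import Mathlib

open Finset RealInnerProductSpace

attribute [local instance] Classical.propDecidable

section FarkasAux

variable {ι : Type*} [Fintype ι] {E : Type*} [AddCommGroup E] [Module ℝ E]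

lemma carat_aux (A : ι → E) : ∀ (N : ℕ) (t : ι → ℝ),
    (univ.filter (fun i => t i ≠ 0)).card ≤ N → (∀ i, 0 ≤ t i) →
    ∃ t' : ι → ℝ, (∀ i, 0 ≤ t' i) ∧ ∑ i, t' i • A i = ∑ i, t i • A i ∧
      LinearIndependent ℝ (fun i : {i // t' i ≠ 0} => A i) := by
  intro N
  induction N with
  | zero =>
    intro t hc ht
    refine ⟨t, ht, rfl, ?_⟩
    have : ∀ i, t i = 0 := by
      intro i
      by_contra h
      have : i ∈ univ.filter (fun i => t i ≠ 0) := by simp [h]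
      have := Finset.card_pos.mpr ⟨i, this⟩
      omega
    haveI : IsEmpty {i // t i ≠ 0} := ⟨fun ⟨i, hi⟩ => hi (this i)⟩
    exact linearIndependent_empty_type
  | succ N ih =>
    intro t hc ht
    by_cases hli : LinearIndependent ℝ (fun i : {i // t i ≠ 0} => A i)
    · exact ⟨t, ht, rfl, hli⟩
    · rw [Fintype.not_linearIndependent_iff] at hli
      obtain ⟨g, hg, j0, hj0⟩ := hli
      -- extend g to ι
      set c : ι → ℝ := fun i => if h : t i ≠ 0 then g ⟨i, h⟩ else 0 with hcdef
      have hcsum : ∑ i, c i • A i = 0 := by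
        calc ∑ i, c i • A i
            = ∑ i ∈ univ.filter (fun i => t i ≠ 0), c i • A i := by
              rw [Finset.sum_filter_of_ne]
              intro x _ hx; by_contra h; simp [hcdef, h] at hx
          _ = ∑ i : {i // t i ≠ 0}, c (i : ι) • A (i : ι) :=
              Finset.sum_subtype _ (by simp) (fun i => c i • A i)
          _ = ∑ i : {i // t i ≠ 0}, g i • A (i : ι) := by
              refine Finset.sum_congr rfl fun i _ => ?_
              simp [hcdef, i.prop]
          _ = 0 := hg
      have hcsupp : ∀ i, t i = 0 → c i = 0 := by intro i h; simp [hcdef, h]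
      -- wlog some c i > 0
      have key : ∀ c : ι → ℝ, (∑ i, c i • A i = 0) → (∀ i, t i = 0 → c i = 0) →
          (∃ i, 0 < c i) → ∃ t' : ι → ℝ, (∀ i, 0 ≤ t' i) ∧
            ∑ i, t' i • A i = ∑ i, t i • A i ∧
            LinearIndependent ℝ (fun i : {i // t' i ≠ 0} => A i) := by
        intro c hcsum hcsupp ⟨iw, hiw⟩
        set T : Finset ι := univ.filter (fun i => 0 < c i) with hT
        have hTne : T.Nonempty := ⟨iw, by simp [hT, hiw]⟩
        obtain ⟨i0, hi0T, hi0min⟩ := T.exists_min_image (fun i => t i / c i) hTne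
        have hci0 : 0 < c i0 := by simpa [hT] using hi0T
        set lam : ℝ := t i0 / c i0 with hlam
        have hlam0 : 0 ≤ lam := div_nonneg (ht i0) hci0.le
        set t'' : ι → ℝ := fun i => t i - lam * c i with ht''
        have ht''0 : ∀ i, 0 ≤ t'' i := by
          intro i
          by_cases h : 0 < c i
          · have := hi0min i (by simp [hT, h])
            have : lam ≤ t i / c i := this
            simp only [ht'', sub_nonneg]
            calc lam * c i ≤ (t i / c i) * c i := by nlinarith
              _ = t i := by field_simp
          · push_neg at h
            have : lam * c i ≤ 0 := mul_nonpos_of_nonneg_of_nonpos hlam0 h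
            simp only [ht'', sub_nonneg]; linarith [ht i]
        have hsum : ∑ i, t'' i • A i = ∑ i, t i • A i := by
          simp only [ht'', sub_smul, Finset.sum_sub_distrib, mul_smul]
          rw [← Finset.smul_sum, hcsum, smul_zero, sub_zero]
        have hsubset : (univ.filter (fun i => t'' i ≠ 0)) ⊂ (univ.filter (fun i => t i ≠ 0)) := by
          constructor
          · intro i hi
            simp only [mem_filter, mem_univ, true_and] at hi ⊢
            intro h
            exact hi (by simp [ht'', h, hcsupp i h])
          · intro hsub
            have hti0 : t i0 ≠ 0 := by
              intro h
              exact absurd (hcsupp i0 h) (ne_of_gt hci0)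
            have : i0 ∈ univ.filter (fun i => t i ≠ 0) := by simp [hti0]
            have := hsub this
            simp only [mem_filter, mem_univ, true_and] at this
            apply this
            simp [ht'', hlam]
            field_simp
            ring
        have hcard : (univ.filter (fun i => t'' i ≠ 0)).card ≤ N := by
          have := Finset.card_lt_card hsubset
          omega
        obtain ⟨t', h1, h2, h3⟩ := ih t'' hcard ht''0
        exact ⟨t', h1, h2.trans hsum, h3⟩
      by_cases hpos : ∃ i, 0 < c i
      · exact key c hcsum hcsupp hpos
      · apply key (fun i => -c i) (by simp only [neg_smul, Finset.sum_neg_distrib, hcsum, neg_zero])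
          (fun i h => by simp [hcsupp i h])
        push_neg at hpos
        have hne : c (j0 : ι) ≠ 0 := by simpa [hcdef, j0.prop] using hj0
        exact ⟨j0, by have := hpos (j0 : ι); simp only [neg_pos]; exact lt_of_le_of_ne this hne⟩

variable {κ : Type*} [Fintype κ]

lemma isClosed_coneSet (A : ι → EuclideanSpace ℝ κ) :
    IsClosed {b : EuclideanSpace ℝ κ | ∃ t : ι → ℝ, (∀ i, 0 ≤ t i) ∧ ∑ i, t i • A i = b} := by
  have key : {b : EuclideanSpace ℝ κ | ∃ t : ι → ℝ, (∀ i, 0 ≤ t i) ∧ ∑ i, t i • A i = b}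
      = ⋃ S : Set ι, {b | LinearIndependent ℝ (fun i : S => A i) ∧
          ∃ t : S → ℝ, (∀ i, 0 ≤ t i) ∧ ∑ i, t i • A (i : ι) = b} := by
    ext b
    simp only [Set.mem_setOf_eq, Set.mem_iUnion]
    constructor
    · rintro ⟨t, ht, hsum⟩
      obtain ⟨t', ht', hsum', hli⟩ := carat_aux A (Fintype.card ι) t (le_trans (Finset.card_le_univ _) (le_of_eq (Finset.card_univ))) ht
      refine ⟨{i | t' i ≠ 0}, hli, fun i => t' i, fun i => ht' i, ?_⟩
      rw [← hsum, ← hsum']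
      have h2 : (∑ i : {i | t' i ≠ 0}, t' (i : ι) • A (i : ι)) = ∑ i, t' i • A i := by
        calc ∑ i : {i | t' i ≠ 0}, t' (i : ι) • A (i : ι)
          = ∑ i ∈ univ.filter (fun i => t' i ≠ 0), t' i • A i :=
            (Finset.sum_subtype _ (by simp) (fun i => t' i • A i)).symm
        _ = ∑ i, t' i • A i := by
            rw [Finset.sum_filter_of_ne]
            intro x _ hx; by_contra h; simp [h] at hx
      convert h2 using 2
      exact congrArg (fun inst => @univ _ inst) (Subsingleton.elim _ _)
    · rintro ⟨S, hli, t, ht, hsum⟩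
      refine ⟨fun i => if h : i ∈ S then t ⟨i, h⟩ else 0, fun i => ?_, ?_⟩
      · by_cases h : i ∈ S <;> simp [h, ht]
      · rw [← hsum]
        calc ∑ i, (if h : i ∈ S then t ⟨i, h⟩ else 0) • A i
            = ∑ i ∈ univ.filter (fun i => i ∈ S), (if h : i ∈ S then t ⟨i, h⟩ else 0) • A i := by
              rw [Finset.sum_filter_of_ne]
              intro x _ hx; by_contra h; simp [h] at hx
          _ = ∑ i : S, (if h : (i : ι) ∈ S then t ⟨i, h⟩ else 0) • A (i : ι) :=
              Finset.sum_subtype _ (by simp) _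
          _ = ∑ i : S, t i • A (i : ι) := by
              refine Finset.sum_congr rfl fun i _ => ?_
              simp [i.prop]
  rw [key]
  apply isClosed_iUnion_of_finite
  intro S
  by_cases hli : LinearIndependent ℝ (fun i : S => A i)
  · have : {b : EuclideanSpace ℝ κ | LinearIndependent ℝ (fun i : S => A i) ∧
        ∃ t : S → ℝ, (∀ i, 0 ≤ t i) ∧ ∑ i, t i • A (i : ι) = b}
        = (fun t : S → ℝ => ∑ i, t i • A (i : ι)) '' {t | ∀ i, 0 ≤ t i} := by
      ext b
      simp only [Set.mem_setOf_eq, Set.mem_image, hli, true_and]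
    rw [this]
    set L : (S → ℝ) →ₗ[ℝ] EuclideanSpace ℝ κ :=
      { toFun := fun t => ∑ i, t i • A (i : ι)
        map_add' := fun a b => by simp [add_smul, Finset.sum_add_distrib]
        map_smul' := fun r a => by simp [smul_smul, Finset.smul_sum] } with hL
    have hinj : Function.Injective L := by
      rw [← LinearMap.ker_eq_bot, LinearMap.ker_eq_bot']
      intro a ha
      have := Fintype.linearIndependent_iff.mp hli a (by simpa [hL] using ha)
      funext i; exact this i
    have hce := L.isClosedEmbedding_of_injective (LinearMap.ker_eq_bot.mpr hinj)
    have hcl : IsClosed {t : S → ℝ | ∀ i, 0 ≤ t i} := by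
      have : {t : S → ℝ | ∀ i, 0 ≤ t i} = ⋂ i, {t : S → ℝ | 0 ≤ t i} := by
        ext; simp
      rw [this]
      exact isClosed_iInter fun i => isClosed_le continuous_const (continuous_apply i)
    exact hce.isClosedMap _ hcl
  · have : {b : EuclideanSpace ℝ κ | LinearIndependent ℝ (fun i : S => A i) ∧
        ∃ t : S → ℝ, (∀ i, 0 ≤ t i) ∧ ∑ i, t i • A (i : ι) = b} = ∅ := by
      ext b; simp [hli]
    rw [this]; exact isClosed_empty

theorem farkas (A : ι → EuclideanSpace ℝ κ) (b : EuclideanSpace ℝ κ) :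
    (∃ t : ι → ℝ, (∀ i, 0 ≤ t i) ∧ ∑ i, t i • A i = b) ∨
    ∃ z : EuclideanSpace ℝ κ, (∀ i, 0 ≤ ⟪A i, z⟫) ∧ ⟪b, z⟫ < 0 := by
  by_cases hb : ∃ t : ι → ℝ, (∀ i, 0 ≤ t i) ∧ ∑ i, t i • A i = b
  · exact Or.inl hb
  right
  set K : ConvexCone ℝ (EuclideanSpace ℝ κ) :=
    { carrier := {c | ∃ t : ι → ℝ, (∀ i, 0 ≤ t i) ∧ ∑ i, t i • A i = c}
      smul_mem' := by
        rintro r hr c ⟨t, ht, rfl⟩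
        exact ⟨fun i => r * t i, fun i => mul_nonneg hr.le (ht i),
          by simp [mul_smul, Finset.smul_sum]⟩
      add_mem' := by
        rintro c1 ⟨t1, ht1, rfl⟩ c2 ⟨t2, ht2, rfl⟩
        exact ⟨fun i => t1 i + t2 i, fun i => add_nonneg (ht1 i) (ht2 i),
          by simp [add_smul, Finset.sum_add_distrib]⟩ } with hK
  have hne : (K : Set (EuclideanSpace ℝ κ)).Nonempty :=
    ⟨0, ⟨0, fun i => le_refl 0, by simp⟩⟩
  have hcl : IsClosed (K : Set (EuclideanSpace ℝ κ)) := isClosed_coneSet A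
  have hnm : b ∉ K := hb
  obtain ⟨z, hz1, hz2⟩ : ∃ z, (∀ x ∈ K, 0 ≤ ⟪x, z⟫) ∧ ⟪z, b⟫ < 0 := by
    let C : ProperCone ℝ (EuclideanSpace ℝ κ) :=
      { carrier := (K : Set (EuclideanSpace ℝ κ))
        add_mem' := fun ha hb => K.add_mem ha hb
        zero_mem' := ⟨0, fun i => le_refl 0, by simp⟩
        smul_mem' := by
          rintro ⟨c, hc⟩ _ ⟨t, ht, rfl⟩
          exact ⟨fun i => c * t i, fun i => mul_nonneg hc (ht i),
            by simp [mul_smul, Finset.smul_sum]⟩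
        isClosed' := hcl }
    obtain ⟨z, h1, h2⟩ := ProperCone.hyperplane_separation' C (x₀ := b) hnm
    exact ⟨z, h1, by rwa [real_inner_comm]⟩
  refine ⟨z, fun i => ?_, by rwa [real_inner_comm]⟩
  apply hz1
  refine ⟨fun j => if j = i then 1 else 0, fun j => by positivity, ?_⟩
  simp [ite_smul]

theorem farkas' (g : ι → κ → ℝ) (d : κ → ℝ) :
    (∃ t : ι → ℝ, (∀ i, 0 ≤ t i) ∧ ∀ c, ∑ i, t i * g i c = d c) ∨
    ∃ z : κ → ℝ, (∀ i, 0 ≤ ∑ c, g i c * z c) ∧ ∑ c, d c * z c < 0 := by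
  let eL := WithLp.linearEquiv 2 ℝ (κ → ℝ)
  rcases farkas (fun i => eL.symm (g i)) (eL.symm d) with ⟨t, ht, hsum⟩ | ⟨z, hz1, hz2⟩
  · left
    refine ⟨t, ht, fun c => ?_⟩
    have := congrArg eL hsum
    rw [map_sum, eL.apply_symm_apply] at this
    simp only [map_smul, eL.apply_symm_apply] at this
    have := congrFun this c
    simpa [Finset.sum_apply] using this
  · right
    refine ⟨eL z, fun i => ?_, ?_⟩
    · have := hz1 i
      simpa [PiLp.inner_apply, RCLike.inner_apply, conj_trivial, eL, mul_comm] using this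
    · have := hz2
      simpa [PiLp.inner_apply, RCLike.inner_apply, conj_trivial, eL, mul_comm] using this

end FarkasAux

/-- TSP-feasibility: `π, Q, P` nonnegative, input constraints
`(∑ j, x j i * π j) + Q i * x o i = x o i`, and output constraints
`∑ j, y j r * π j = (1 + P r) * y o r`. -/
def TSPFeasible {n m s : ℕ} (x : Fin n → Fin m → ℝ) (y : Fin n → Fin s → ℝ)
    (o : Fin n) (π : Fin n → ℝ) (Q : Fin m → ℝ) (P : Fin s → ℝ) : Prop :=
  (∀ j, 0 ≤ π j) ∧ (∀ i, 0 ≤ Q i) ∧ (∀ r, 0 ≤ P r) ∧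
  (∀ i, (∑ j, x j i * π j) + Q i * x o i = x o i) ∧
  (∀ r, ∑ j, y j r * π j = (1 + P r) * y o r)

/-- TGP-feasibility for `τ`: nonnegative virtual gap for every unit `j`,
and each virtual price of unit `o` bounded below by `τ`. -/
def TGPFeasible {n m s : ℕ} (x : Fin n → Fin m → ℝ) (y : Fin n → Fin s → ℝ)
    (o : Fin n) (τ : ℝ) (v : Fin m → ℝ) (u : Fin s → ℝ) : Prop :=
  (∀ j, 0 ≤ ∑ i, v i * x j i - ∑ r, u r * y j r) ∧
  (∀ i, τ ≤ x o i * v i) ∧ (∀ r, τ ≤ y o r * u r)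

lemma weak_duality {n m s : ℕ} (x : Fin n → Fin m → ℝ) (y : Fin n → Fin s → ℝ) (o : Fin n)
    (τ : ℝ) (hτ : 0 < τ) (π' : Fin n → ℝ) (Q' : Fin m → ℝ) (P' : Fin s → ℝ)
    (v' : Fin m → ℝ) (u' : Fin s → ℝ)
    (hp : TSPFeasible x y o π' Q' P') (hd : TGPFeasible x y o τ v' u') :
    τ * (∑ i, Q' i + ∑ r, P' r) ≤ ∑ i, v' i * x o i - ∑ r, u' r * y o r := by
  obtain ⟨hπ, hQ, hP, hin, hout⟩ := hp
  obtain ⟨hgap, hv, hu⟩ := hd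
  have e1 : ∑ i, v' i * x o i
      = (∑ j, π' j * ∑ i, v' i * x j i) + ∑ i, Q' i * (x o i * v' i) := by
    calc ∑ i, v' i * x o i
        = ∑ i, ((∑ j, v' i * x j i * π' j) + Q' i * (x o i * v' i)) := by
          refine Finset.sum_congr rfl fun i _ => ?_
          have e : v' i * x o i = v' i * ((∑ j, x j i * π' j) + Q' i * x o i) := by
            rw [hin i]
          rw [e, mul_add, Finset.mul_sum]
          exact congrArg₂ (· + ·) (Finset.sum_congr rfl fun j _ => by ring) (by ring)
      _ = (∑ i, ∑ j, v' i * x j i * π' j) + ∑ i, Q' i * (x o i * v' i) := by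
          rw [Finset.sum_add_distrib]
      _ = (∑ j, π' j * ∑ i, v' i * x j i) + ∑ i, Q' i * (x o i * v' i) := by
          rw [Finset.sum_comm]
          congr 1
          refine Finset.sum_congr rfl fun j _ => ?_
          rw [Finset.mul_sum]
          exact Finset.sum_congr rfl fun i _ => by ring
  have e2 : ∑ r, u' r * y o r
      = (∑ j, π' j * ∑ r, u' r * y j r) - ∑ r, P' r * (y o r * u' r) := by
    calc ∑ r, u' r * y o r
        = ∑ r, ((∑ j, u' r * y j r * π' j) - P' r * (y o r * u' r)) := by
          refine Finset.sum_congr rfl fun r _ => ?_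
          have h := hout r
          have : u' r * ∑ j, y j r * π' j = u' r * ((1 + P' r) * y o r) := by rw [h]
          rw [Finset.mul_sum] at this
          have h2 : ∑ j, u' r * (y j r * π' j) = ∑ j, u' r * y j r * π' j :=
            Finset.sum_congr rfl fun j _ => by ring
          rw [h2] at this
          linarith [this]
      _ = (∑ r, ∑ j, u' r * y j r * π' j) - ∑ r, P' r * (y o r * u' r) := by
          rw [Finset.sum_sub_distrib]
      _ = _ := by
          rw [Finset.sum_comm]
          congr 1
          refine Finset.sum_congr rfl fun j _ => ?_
          rw [Finset.mul_sum]
          exact Finset.sum_congr rfl fun r _ => by ring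
  have key : ∑ i, v' i * x o i - ∑ r, u' r * y o r
      = (∑ j, π' j * (∑ i, v' i * x j i - ∑ r, u' r * y j r))
        + ∑ i, Q' i * (x o i * v' i) + ∑ r, P' r * (y o r * u' r) := by
    rw [e1, e2]
    have : ∑ j, π' j * (∑ i, v' i * x j i - ∑ r, u' r * y j r)
        = (∑ j, π' j * ∑ i, v' i * x j i) - ∑ j, π' j * ∑ r, u' r * y j r := by
      rw [← Finset.sum_sub_distrib]
      exact Finset.sum_congr rfl fun j _ => by ring
    rw [this]; ring
  rw [key]
  have b1 : 0 ≤ ∑ j, π' j * (∑ i, v' i * x j i - ∑ r, u' r * y j r) :=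
    Finset.sum_nonneg fun j _ => mul_nonneg (hπ j) (hgap j)
  have b2 : ∑ i, τ * Q' i ≤ ∑ i, Q' i * (x o i * v' i) :=
    Finset.sum_le_sum fun i _ => by
      rw [mul_comm τ (Q' i)]
      exact mul_le_mul_of_nonneg_left (hv i) (hQ i)
  have b3 : ∑ r, τ * P' r ≤ ∑ r, P' r * (y o r * u' r) :=
    Finset.sum_le_sum fun r _ => by
      rw [mul_comm τ (P' r)]
      exact mul_le_mul_of_nonneg_left (hu r) (hP r)
  have : τ * (∑ i, Q' i + ∑ r, P' r) = ∑ i, τ * Q' i + ∑ r, τ * P' r := by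
    rw [← Finset.mul_sum, ← Finset.mul_sum]; ring
  linarith

lemma exists_primal_max {n m s : ℕ} (x : Fin n → Fin m → ℝ) (y : Fin n → Fin s → ℝ)
    (o : Fin n) (hx : ∀ j i, 0 < x j i) (hy : ∀ j r, 0 < y j r) (hm : 1 ≤ m) :
    ∃ π₀ ∈ {π : Fin n → ℝ | (∀ j, 0 ≤ π j) ∧ (∀ i, ∑ j, x j i * π j ≤ x o i) ∧
        (∀ r, y o r ≤ ∑ j, y j r * π j)},
      IsMaxOn (fun π => (∑ i, (1 - (∑ j, x j i * π j) / x o i))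
        + ∑ r, ((∑ j, y j r * π j) / y o r - 1))
        {π : Fin n → ℝ | (∀ j, 0 ≤ π j) ∧ (∀ i, ∑ j, x j i * π j ≤ x o i) ∧
          (∀ r, y o r ≤ ∑ j, y j r * π j)} π₀ := by
  classical
  set S : Set (Fin n → ℝ) := {π : Fin n → ℝ | (∀ j, 0 ≤ π j) ∧
      (∀ i, ∑ j, x j i * π j ≤ x o i) ∧ (∀ r, y o r ≤ ∑ j, y j r * π j)} with hS
  have hne : S.Nonempty := by
    refine ⟨fun j => if j = o then 1 else 0, fun j => by positivity, fun i => ?_, fun r => ?_⟩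
    · have : ∑ j, x j i * (if j = o then 1 else 0) = x o i := by
        simp [mul_ite]
      rw [this]
    · have : ∑ j, y j r * (if j = o then 1 else 0) = y o r := by
        simp [mul_ite]
      rw [this]
  have hclosed : IsClosed S := by
    have h1 : IsClosed {π : Fin n → ℝ | ∀ j, 0 ≤ π j} := by
      have : {π : Fin n → ℝ | ∀ j, 0 ≤ π j} = ⋂ j, {π : Fin n → ℝ | 0 ≤ π j} := by ext; simp
      rw [this]
      exact isClosed_iInter fun j => isClosed_le continuous_const (continuous_apply j)
    have h2 : IsClosed {π : Fin n → ℝ | ∀ i, ∑ j, x j i * π j ≤ x o i} := by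
      have : {π : Fin n → ℝ | ∀ i, ∑ j, x j i * π j ≤ x o i}
          = ⋂ i, {π : Fin n → ℝ | ∑ j, x j i * π j ≤ x o i} := by ext; simp
      rw [this]
      refine isClosed_iInter fun i => isClosed_le ?_ continuous_const
      exact continuous_finset_sum _ fun j _ => (continuous_const.mul (continuous_apply j))
    have h3 : IsClosed {π : Fin n → ℝ | ∀ r, y o r ≤ ∑ j, y j r * π j} := by
      have : {π : Fin n → ℝ | ∀ r, y o r ≤ ∑ j, y j r * π j}
          = ⋂ r, {π : Fin n → ℝ | y o r ≤ ∑ j, y j r * π j} := by ext; simp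
      rw [this]
      refine isClosed_iInter fun r => isClosed_le continuous_const ?_
      exact continuous_finset_sum _ fun j _ => (continuous_const.mul (continuous_apply j))
    have : S = {π : Fin n → ℝ | ∀ j, 0 ≤ π j} ∩
        ({π : Fin n → ℝ | ∀ i, ∑ j, x j i * π j ≤ x o i} ∩
         {π : Fin n → ℝ | ∀ r, y o r ≤ ∑ j, y j r * π j}) := by
      ext π; constructor
      · rintro ⟨a, b, c⟩; exact ⟨a, b, c⟩
      · rintro ⟨a, b, c⟩; exact ⟨a, b, c⟩
    rw [this]
    exact h1.inter (h2.inter h3)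
  obtain ⟨i₀, _⟩ : ∃ i : Fin m, True := ⟨⟨0, hm⟩, trivial⟩
  have hcompact : IsCompact S := by
    refine IsCompact.of_isClosed_subset
      (isCompact_univ_pi (fun j => isCompact_Icc (a := (0:ℝ)) (b := x o i₀ / x j i₀)))
      hclosed ?_
    rintro π ⟨h1, h2, _⟩
    rw [Set.mem_univ_pi]
    intro j
    refine ⟨h1 j, ?_⟩
    have hterm : x j i₀ * π j ≤ ∑ j', x j' i₀ * π j' :=
      Finset.single_le_sum (fun j' _ => mul_nonneg (hx j' i₀).le (h1 j')) (mem_univ j)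
    have := le_trans hterm (h2 i₀)
    rw [le_div_iff₀ (hx j i₀)]
    linarith [this]
  have hcont : Continuous (fun π : Fin n → ℝ => (∑ i, (1 - (∑ j, x j i * π j) / x o i))
      + ∑ r, ((∑ j, y j r * π j) / y o r - 1)) := by
    apply Continuous.add
    · apply continuous_finset_sum
      intro i _
      exact continuous_const.sub ((continuous_finset_sum _ fun j _ =>
        (continuous_const.mul (continuous_apply j))).div_const _)
    · apply continuous_finset_sum
      intro r _
      exact ((continuous_finset_sum _ fun j _ =>
        (continuous_const.mul (continuous_apply j))).div_const _).sub continuous_const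
  exact hcompact.exists_isMaxOn hne hcont.continuousOn

lemma div_helper1 (c zt Sx q : ℝ) (hc : c ≠ 0) (hzt : zt ≠ 0) :
    zt * (1 - (Sx / zt) / c) - q = (c * zt - Sx - c * q) / c := by
  field_simp

lemma div_helper2 (c zt Sy p : ℝ) (hc : c ≠ 0) (hzt : zt ≠ 0) :
    zt * ((Sy / zt) / c - 1) - p = (Sy - c * zt - c * p) / c := by
  field_simp

/-- Strong duality for the PTE program (Eq. (17)). -/
theorem pte_strong_duality
    (n m s : ℕ) (x : Fin n → Fin m → ℝ) (y : Fin n → Fin s → ℝ) (o : Fin n)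
    (hx : ∀ j i, 0 < x j i) (hy : ∀ j r, 0 < y j r)
    (hm : 1 ≤ m) (hs : 1 ≤ s) (τ : ℝ) (hτ : 0 < τ) :
    ∃ (π : Fin n → ℝ) (Q : Fin m → ℝ) (P : Fin s → ℝ)
      (v : Fin m → ℝ) (u : Fin s → ℝ),
      TSPFeasible x y o π Q P ∧ TGPFeasible x y o τ v u ∧
      τ * (∑ i, Q i + ∑ r, P r) = ∑ i, v i * x o i - ∑ r, u r * y o r ∧
      (∀ π' Q' P', TSPFeasible x y o π' Q' P' →
        τ * (∑ i, Q' i + ∑ r, P' r) ≤ τ * (∑ i, Q i + ∑ r, P r)) ∧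
      (∀ v' u', TGPFeasible x y o τ v' u' →
        ∑ i, v i * x o i - ∑ r, u r * y o r
          ≤ ∑ i, v' i * x o i - ∑ r, u' r * y o r) := by
  classical
  set S : Set (Fin n → ℝ) := {π : Fin n → ℝ | (∀ j, 0 ≤ π j) ∧
      (∀ i, ∑ j, x j i * π j ≤ x o i) ∧ (∀ r, y o r ≤ ∑ j, y j r * π j)} with hSdef
  set f : (Fin n → ℝ) → ℝ := fun π => (∑ i, (1 - (∑ j, x j i * π j) / x o i))
      + ∑ r, ((∑ j, y j r * π j) / y o r - 1) with hfdef
  obtain ⟨π₀, hπ₀S, hmax⟩ := exists_primal_max x y o hx hy hm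
  obtain ⟨hπ₀0, hπ₀x, hπ₀y⟩ := hπ₀S
  set Qs : Fin m → ℝ := fun i => 1 - (∑ j, x j i * π₀ j) / x o i with hQs
  set Ps : Fin s → ℝ := fun r => (∑ j, y j r * π₀ j) / y o r - 1 with hPs
  set γ : ℝ := τ * (∑ i, Qs i + ∑ r, Ps r) with hγ
  have hγf : γ = τ * f π₀ := rfl
  -- TSP feasibility of (π₀, Qs, Ps)
  have hTSPgen : ∀ π' : Fin n → ℝ, π' ∈ S → TSPFeasible x y o π'
      (fun i => 1 - (∑ j, x j i * π' j) / x o i)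
      (fun r => (∑ j, y j r * π' j) / y o r - 1) := by
    rintro π' ⟨h1, h2, h3⟩
    refine ⟨h1, fun i => ?_, fun r => ?_, fun i => ?_, fun r => ?_⟩
    · simp only [sub_nonneg]
      exact div_le_one_of_le₀ (h2 i) (hx o i).le
    · simp only [sub_nonneg]
      rw [le_div_iff₀ (hy o r)]
      simpa using h3 r
    · have hc := (hx o i).ne'
      field_simp
      ring
    · have hc := (hy o r).ne'
      field_simp
      ring
  have hTSP0 : TSPFeasible x y o π₀ Qs Ps := hTSPgen π₀ ⟨hπ₀0, hπ₀x, hπ₀y⟩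
  -- Any TSP-feasible triple gives a point of S with matching objective
  have hfeas : ∀ π' Q' P', TSPFeasible x y o π' Q' P' →
      π' ∈ S ∧ (∑ i, Q' i + ∑ r, P' r = f π') := by
    intro π' Q' P' ⟨h1, h2, h3, h4, h5⟩
    have hQeq : ∀ i, Q' i = 1 - (∑ j, x j i * π' j) / x o i := by
      intro i
      have hc := (hx o i).ne'
      have h := h4 i
      field_simp
      linarith
    have hPeq : ∀ r, P' r = (∑ j, y j r * π' j) / y o r - 1 := by
      intro r
      have hc := (hy o r).ne'
      have h := h5 r
      field_simp
      nlinarith [h]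
    refine ⟨⟨h1, fun i => ?_, fun r => ?_⟩, ?_⟩
    · nlinarith [h4 i, mul_nonneg (h2 i) (hx o i).le]
    · nlinarith [h5 r, mul_nonneg (h3 r) (hy o r).le]
    · simp only [hfdef]
      rw [Finset.sum_congr rfl (fun i _ => hQeq i), Finset.sum_congr rfl (fun r _ => hPeq r)]
  -- primal optimality vs γ
  have hprimal : ∀ π' Q' P', TSPFeasible x y o π' Q' P' →
      τ * (∑ i, Q' i + ∑ r, P' r) ≤ γ := by
    intro π' Q' P' h
    obtain ⟨hmem, heq⟩ := hfeas π' Q' P' h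
    rw [heq, hγf]
    have hf0 : ∑ i, Qs i + ∑ r, Ps r = f π₀ := rfl
    exact mul_le_mul_of_nonneg_left (hmax hmem) hτ.le
  -- Farkas application
  set g : ((Fin m ⊕ Fin s) ⊕ (Fin n ⊕ (Fin m ⊕ (Fin s ⊕ Unit))))
      → (Fin n ⊕ (Fin m ⊕ (Fin s ⊕ Unit))) → ℝ :=
    Sum.elim
      (Sum.elim
        (fun i => Sum.elim (fun j => -(x j i))
          (Sum.elim (fun i' => if i' = i then -(x o i) else 0)
            (Sum.elim (fun _ => 0) (fun _ => x o i))))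
        (fun r => Sum.elim (fun j => y j r)
          (Sum.elim (fun _ => 0)
            (Sum.elim (fun r' => if r' = r then -(y o r) else 0) (fun _ => -(y o r))))))
      (fun c => fun c' => if c' = c then 1 else 0) with hg
  set d : (Fin n ⊕ (Fin m ⊕ (Fin s ⊕ Unit))) → ℝ :=
    Sum.elim (fun _ => 0) (Sum.elim (fun _ => -τ) (Sum.elim (fun _ => -τ) (fun _ => γ))) with hd
  rcases farkas' g d with ⟨t, ht, heq⟩ | ⟨z, hz1, hz2⟩
  · -- dual solution found
    set v : Fin m → ℝ := fun i => t (.inl (.inl i)) with hv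
    set u : Fin s → ℝ := fun r => t (.inl (.inr r)) with hu
    set w : (Fin n ⊕ (Fin m ⊕ (Fin s ⊕ Unit))) → ℝ := fun c => t (.inr c) with hw
    have hTGP : TGPFeasible x y o τ v u := by
      refine ⟨fun j => ?_, fun i => ?_, fun r => ?_⟩
      · have H := heq (.inl j)
        simp only [hg, hd, Fintype.sum_sum_type, Sum.elim_inl, Sum.elim_inr,
          mul_ite, mul_one, mul_zero, Finset.sum_ite_eq, mem_univ, if_true,
          Sum.inl.injEq, Sum.inr.injEq, reduceCtorEq, if_false, Finset.sum_const_zero,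
          Finset.univ_unique, Finset.sum_singleton, mul_neg] at H
        simp only [hv, hu]
        rw [Finset.sum_neg_distrib] at H
        linarith [ht (.inr (.inl j))]
      · have H := heq (.inr (.inl i))
        simp only [hg, hd, Fintype.sum_sum_type, Sum.elim_inl, Sum.elim_inr,
          mul_ite, mul_one, mul_zero, Finset.sum_ite_eq, mem_univ, if_true,
          Sum.inl.injEq, Sum.inr.injEq, reduceCtorEq, if_false, Finset.sum_const_zero,
          Finset.univ_unique, Finset.sum_singleton, mul_neg] at H
        simp only [hv]
        nlinarith [ht (.inr (.inr (.inl i))), H]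
      · have H := heq (.inr (.inr (.inl r)))
        simp only [hg, hd, Fintype.sum_sum_type, Sum.elim_inl, Sum.elim_inr,
          mul_ite, mul_one, mul_zero, Finset.sum_ite_eq, mem_univ, if_true,
          Sum.inl.injEq, Sum.inr.injEq, reduceCtorEq, if_false, Finset.sum_const_zero,
          Finset.univ_unique, Finset.sum_singleton, mul_neg] at H
        simp only [hu]
        nlinarith [ht (.inr (.inr (.inr (.inl r)))), H]
    have Hlast : ∑ i, v i * x o i - ∑ r, u r * y o r ≤ γ := by
      have H := heq (.inr (.inr (.inr ())))
      simp only [hg, hd, Fintype.sum_sum_type, Sum.elim_inl, Sum.elim_inr,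
        mul_ite, mul_one, mul_zero, Finset.sum_ite_eq, mem_univ, if_true,
        Sum.inl.injEq, Sum.inr.injEq, reduceCtorEq, if_false, Finset.sum_const_zero,
        Finset.univ_unique, Finset.sum_singleton, mul_neg] at H
      simp only [hv, hu]
      rw [Finset.sum_neg_distrib] at H
      linarith [ht (.inr (.inr (.inr (.inr ()))))]
    have Hge : γ ≤ ∑ i, v i * x o i - ∑ r, u r * y o r :=
      weak_duality x y o τ hτ π₀ Qs Ps v u hTSP0 hTGP
    have Hval : τ * (∑ i, Qs i + ∑ r, Ps r) = ∑ i, v i * x o i - ∑ r, u r * y o r :=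
      le_antisymm Hge Hlast
    refine ⟨π₀, Qs, Ps, v, u, hTSP0, hTGP, Hval, ?_, ?_⟩
    · intro π' Q' P' h'
      exact hprimal π' Q' P' h'
    · intro v' u' h'
      rw [← Hval]
      exact weak_duality x y o τ hτ π₀ Qs Ps v' u' hTSP0 h'
  · exfalso
    have hz0 : ∀ c, 0 ≤ z c := by
      intro c
      have H := hz1 (.inr c)
      simpa only [hg, Fintype.sum_sum_type, Sum.elim_inl, Sum.elim_inr,
        ite_mul, one_mul, zero_mul, Finset.sum_ite_eq', mem_univ, if_true] using H
    have Hvi : ∀ i : Fin m, ∑ j, x j i * z (.inl j) + x o i * z (.inr (.inl i))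
        ≤ x o i * z (.inr (.inr (.inr ()))) := by
      intro i
      have H := hz1 (.inl (.inl i))
      simp only [hg, Fintype.sum_sum_type, Sum.elim_inl, Sum.elim_inr,
        ite_mul, one_mul, zero_mul, Finset.sum_ite_eq', mem_univ, if_true,
        Sum.inl.injEq, Sum.inr.injEq, reduceCtorEq, if_false, Finset.sum_const_zero,
        Finset.univ_unique, Finset.sum_singleton, neg_mul] at H
      rw [Finset.sum_neg_distrib] at H
      linarith
    have Hur : ∀ r : Fin s, y o r * z (.inr (.inr (.inl r))) + y o r * z (.inr (.inr (.inr ())))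
        ≤ ∑ j, y j r * z (.inl j) := by
      intro r
      have H := hz1 (.inl (.inr r))
      simp only [hg, Fintype.sum_sum_type, Sum.elim_inl, Sum.elim_inr,
        ite_mul, one_mul, zero_mul, Finset.sum_ite_eq', mem_univ, if_true,
        Sum.inl.injEq, Sum.inr.injEq, reduceCtorEq, if_false, Finset.sum_const_zero,
        Finset.univ_unique, Finset.sum_singleton, neg_mul] at H
      linarith
    have Hobj : γ * z (.inr (.inr (.inr ())))
        < τ * (∑ i, z (.inr (.inl i)) + ∑ r, z (.inr (.inr (.inl r)))) := by
      have H := hz2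
      simp only [hd, Fintype.sum_sum_type, Sum.elim_inl, Sum.elim_inr,
        zero_mul, Finset.sum_const_zero, neg_mul,
        Finset.univ_unique, Finset.sum_singleton] at H
      rw [Finset.sum_neg_distrib, Finset.sum_neg_distrib,
        ← Finset.mul_sum, ← Finset.mul_sum] at H
      linarith
    set zt : ℝ := z (.inr (.inr (.inr ()))) with hzt
    rcases eq_or_lt_of_le (hz0 (.inr (.inr (.inr ())))) with h0 | hpos
    · -- zt = 0 case
      have hzt0 : zt = 0 := h0.symm
      obtain ⟨i₀⟩ : Nonempty (Fin m) := ⟨⟨0, hm⟩⟩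
      have hπz : ∀ j, z (.inl j) = 0 := by
        intro j
        have H := Hvi i₀
        rw [hzt0, mul_zero] at H
        have hsum0 : ∑ j', x j' i₀ * z (.inl j') = 0 := by
          have hnn : 0 ≤ ∑ j', x j' i₀ * z (.inl j') :=
            Finset.sum_nonneg fun j' _ => mul_nonneg (hx j' i₀).le (hz0 _)
          have h2 : 0 ≤ x o i₀ * z (.inr (.inl i₀)) := mul_nonneg (hx o i₀).le (hz0 _)
          linarith
        have := (Finset.sum_eq_zero_iff_of_nonneg
          (fun j' _ => mul_nonneg (hx j' i₀).le (hz0 (.inl j')))).mp hsum0 j (mem_univ j)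
        exact (mul_eq_zero.mp this).resolve_left (hx j i₀).ne'
      have hq : ∀ i, z (.inr (.inl i)) = 0 := by
        intro i
        have H := Hvi i
        rw [hzt0, mul_zero] at H
        have hs0 : ∑ j, x j i * z (.inl j) = 0 :=
          Finset.sum_eq_zero fun j _ => by rw [hπz j, mul_zero]
        rw [hs0] at H
        have := hz0 (.inr (.inl i))
        nlinarith [hx o i]
      have hp : ∀ r, z (.inr (.inr (.inl r))) = 0 := by
        intro r
        have H := Hur r
        rw [hzt0, mul_zero] at H
        have hs0 : ∑ j, y j r * z (.inl j) = 0 :=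
          Finset.sum_eq_zero fun j _ => by rw [hπz j, mul_zero]
        rw [hs0] at H
        have := hz0 (.inr (.inr (.inl r)))
        nlinarith [hy o r]
      rw [hzt0, mul_zero, Finset.sum_eq_zero (fun i _ => hq i),
        Finset.sum_eq_zero (fun r _ => hp r)] at Hobj
      simp at Hobj
    · -- zt > 0 case
      set πh : Fin n → ℝ := fun j => z (.inl j) / zt with hπh
      have hπhS : πh ∈ S := by
        refine ⟨fun j => div_nonneg (hz0 _) hpos.le, fun i => ?_, fun r => ?_⟩
        · have H := Hvi i
          have h2 : 0 ≤ x o i * z (.inr (.inl i)) := mul_nonneg (hx o i).le (hz0 _)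
          have e : ∑ j, x j i * πh j = (∑ j, x j i * z (.inl j)) / zt := by
            rw [Finset.sum_div]
            exact Finset.sum_congr rfl fun j _ => (mul_div_assoc _ _ _).symm
          rw [e, div_le_iff₀ hpos]
          nlinarith
        · have H := Hur r
          have h2 : 0 ≤ y o r * z (.inr (.inr (.inl r))) := mul_nonneg (hy o r).le (hz0 _)
          have e : ∑ j, y j r * πh j = (∑ j, y j r * z (.inl j)) / zt := by
            rw [Finset.sum_div]
            exact Finset.sum_congr rfl fun j _ => (mul_div_assoc _ _ _).symm
          rw [e, le_div_iff₀ hpos]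
          nlinarith
      have hfeasible := hTSPgen πh hπhS
      have hpr : τ * ((∑ i, (1 - (∑ j, x j i * πh j) / x o i))
          + ∑ r, ((∑ j, y j r * πh j) / y o r - 1)) ≤ γ :=
        hprimal πh _ _ hfeasible
      have hQb : ∀ i, z (.inr (.inl i)) ≤ zt * (1 - (∑ j, x j i * πh j) / x o i) := by
        intro i
        have H := Hvi i
        have e : ∑ j, x j i * πh j = (∑ j, x j i * z (.inl j)) / zt := by
          rw [Finset.sum_div]
          exact Finset.sum_congr rfl fun j _ => (mul_div_assoc _ _ _).symm
        rw [e]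
        have hxo := hx o i
        have hztne : zt ≠ 0 := ne_of_gt hpos
        have hxone : x o i ≠ 0 := (hx o i).ne'
        have diff : zt * (1 - ((∑ j, x j i * z (.inl j)) / zt) / x o i) - z (.inr (.inl i))
            = (x o i * zt - (∑ j, x j i * z (.inl j)) - x o i * z (.inr (.inl i)))
              / x o i := div_helper1 _ _ _ _ hxone hztne
        have hnum : 0 ≤ x o i * zt - (∑ j, x j i * z (.inl j)) - x o i * z (.inr (.inl i)) := by
          linarith
        have : 0 ≤ zt * (1 - ((∑ j, x j i * z (.inl j)) / zt) / x o i) - z (.inr (.inl i)) := by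
          rw [diff]
          positivity
        linarith
      have hPb : ∀ r, z (.inr (.inr (.inl r))) ≤ zt * ((∑ j, y j r * πh j) / y o r - 1) := by
        intro r
        have H := Hur r
        have e : ∑ j, y j r * πh j = (∑ j, y j r * z (.inl j)) / zt := by
          rw [Finset.sum_div]
          exact Finset.sum_congr rfl fun j _ => (mul_div_assoc _ _ _).symm
        rw [e]
        have hyo := hy o r
        have hztne : zt ≠ 0 := ne_of_gt hpos
        have hyone : y o r ≠ 0 := (hy o r).ne'
        have diff : zt * (((∑ j, y j r * z (.inl j)) / zt) / y o r - 1) - z (.inr (.inr (.inl r)))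
            = ((∑ j, y j r * z (.inl j)) - y o r * zt - y o r * z (.inr (.inr (.inl r))))
              / y o r := div_helper2 _ _ _ _ hyone hztne
        have hnum : 0 ≤ (∑ j, y j r * z (.inl j)) - y o r * zt - y o r * z (.inr (.inr (.inl r))) := by
          linarith
        have : 0 ≤ zt * (((∑ j, y j r * z (.inl j)) / zt) / y o r - 1) - z (.inr (.inr (.inl r))) := by
          rw [diff]
          positivity
        linarith
      have s1 : ∑ i, z (.inr (.inl i)) ≤ zt * ∑ i, (1 - (∑ j, x j i * πh j) / x o i) := by
        rw [Finset.mul_sum]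
        exact Finset.sum_le_sum fun i _ => hQb i
      have s2 : ∑ r, z (.inr (.inr (.inl r))) ≤ zt * ∑ r, ((∑ j, y j r * πh j) / y o r - 1) := by
        rw [Finset.mul_sum]
        exact Finset.sum_le_sum fun r _ => hPb r
      set A := ∑ i, (1 - (∑ j, x j i * πh j) / x o i) with hA
      set B := ∑ r, ((∑ j, y j r * πh j) / y o r - 1) with hB
      have chain : τ * (∑ i, z (.inr (.inl i)) + ∑ r, z (.inr (.inr (.inl r)))) ≤ γ * zt := by
        calc τ * (∑ i, z (.inr (.inl i)) + ∑ r, z (.inr (.inr (.inl r))))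
            ≤ τ * (zt * A + zt * B) := by
              apply mul_le_mul_of_nonneg_left _ hτ.le
              linarith
          _ = zt * (τ * (A + B)) := by ring
          _ ≤ zt * γ := mul_le_mul_of_nonneg_left hpr hpos.le
          _ = γ * zt := by ring
      linarith
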